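/- Let A, B, C, D be subsets of a finite set V with |V| = n such that A∩D, B∩D, C∩D are all nonempty and A\D, B\D, C\D are pairwise disjoint and nonempty. Then there is no bijection f : V → ZMod n (equivalently, a circular ordering of V) under which f(A), f(B), f(C), f(D) are all cyclic intervals. -/
import Mathlib


/-- A cyclic interval `{a, a+1, …, a+l-1}` of `ZMod n`. -/
def IsCyclicInterval {n : ℕ} (S : Set (ZMod n)) : Prop :=
  ∃ (a : ZMod n) (l : ℕ), S = (fun t : ℕ => a + (t : ZMod n)) '' {t | t < l}

private lemma flip_lemma (P : ℕ → Prop) :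
    ∀ b a, a ≤ b → P a → ¬ P b → ∃ t, a ≤ t ∧ t < b ∧ P t ∧ ¬ P (t + 1) := by
  intro b
  induction b with
  | zero => intro a ha hPa hPb; interval_cases a; exact absurd hPa hPb
  | succ b ih =>
    intro a ha hPa hPb
    have hne : a ≠ b + 1 := fun h => hPb (h ▸ hPa)
    have hab : a ≤ b := by omega
    by_cases h : P b
    · exact ⟨b, hab, by omega, h, hPb⟩
    · obtain ⟨t, h1, h2, h3, h4⟩ := ih a hab hPa h
      exact ⟨t, h1, by omega, h3, h4⟩

private lemma key_lemma {n : ℕ} (d : ZMod n) (l : ℕ) (hl : l < n)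
    (X : Set (ZMod n)) (hX : IsCyclicInterval X)
    (h1 : (X ∩ ((fun t : ℕ => d + (t : ZMod n)) '' {t | t < l})).Nonempty)
    (h2 : (X \ ((fun t : ℕ => d + (t : ZMod n)) '' {t | t < l})).Nonempty) :
    d - 1 ∈ X \ ((fun t : ℕ => d + (t : ZMod n)) '' {t | t < l}) ∨
    d + (l : ZMod n) ∈ X \ ((fun t : ℕ => d + (t : ZMod n)) '' {t | t < l}) := by
  classical
  haveI : NeZero n := ⟨by omega⟩
  set Dset : Set (ZMod n) := (fun t : ℕ => d + (t : ZMod n)) '' {t | t < l} with hDset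
  -- d - 1 is not in Dset
  have notin1 : d - 1 ∉ Dset := by
    rintro ⟨t, ht, heq⟩
    simp only [Set.mem_setOf_eq] at ht
    have h0 : ((t + 1 : ℕ) : ZMod n) = 0 := by
      push_cast
      have : (t : ZMod n) = -1 := by linear_combination heq
      rw [this]; ring
    have hdvd := (ZMod.natCast_eq_zero_iff (t + 1) n).mp h0
    have := Nat.le_of_dvd (by omega) hdvd
    omega
  have notin2 : d + (l : ZMod n) ∉ Dset := by
    rintro ⟨t, ht, heq⟩
    simp only [Set.mem_setOf_eq] at ht
    have h0 : (t : ZMod n) = (l : ZMod n) := by linear_combination heq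
    have := congrArg ZMod.val h0
    rw [ZMod.val_natCast, ZMod.val_natCast, Nat.mod_eq_of_lt (by omega),
      Nat.mod_eq_of_lt hl] at this
    omega
  obtain ⟨x, m, hXeq⟩ := hX
  obtain ⟨y1, hy1X, hy1D⟩ := h1
  obtain ⟨y2, hy2X, hy2D⟩ := h2
  rw [hXeq] at hy1X hy2X
  obtain ⟨t1, ht1, rfl⟩ := hy1X
  obtain ⟨t2, ht2, rfl⟩ := hy2X
  simp only [Set.mem_setOf_eq] at ht1 ht2
  rcases lt_or_ge t1 t2 with hlt | hle
  · -- exit flip: find t with x+t ∈ D, x+(t+1) ∉ D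
    obtain ⟨t, hta, htb, htD, htD'⟩ :=
      flip_lemma (fun t => x + (t : ZMod n) ∈ Dset) t2 t1 (le_of_lt hlt) hy1D hy2D
    obtain ⟨s, hs, hseq⟩ := htD
    simp only [Set.mem_setOf_eq] at hs
    have hsl : s + 1 = l := by
      by_contra hne
      apply htD'
      refine ⟨s + 1, by simp only [Set.mem_setOf_eq]; omega, ?_⟩
      push_cast
      push_cast at hseq
      linear_combination hseq
    right
    constructor
    · rw [hXeq]
      refine ⟨t + 1, by simp only [Set.mem_setOf_eq]; omega, ?_⟩
      push_cast
      push_cast at hseq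
      have : (l : ZMod n) = (s : ZMod n) + 1 := by
        rw [← hsl]; push_cast; ring
      rw [this]; linear_combination -hseq
    · exact notin2
  · have hne : t1 ≠ t2 := fun h => hy2D (h ▸ hy1D)
    have hlt : t2 < t1 := by omega
    obtain ⟨t, hta, htb, htD, htD'⟩ :=
      flip_lemma (fun t => x + (t : ZMod n) ∉ Dset) t1 t2 (le_of_lt hlt) hy2D
        (not_not_intro hy1D)
    rw [not_not] at htD'
    obtain ⟨s, hs, hseq⟩ := htD'
    simp only [Set.mem_setOf_eq] at hs
    rcases s with _ | s'
    · -- s = 0 : x + t = d - 1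
      left
      constructor
      · rw [hXeq]
        refine ⟨t, by simp only [Set.mem_setOf_eq]; omega, ?_⟩
        push_cast at hseq
        simp only
        linear_combination -hseq
      · exact notin1
    · exfalso
      apply htD
      refine ⟨s', by simp only [Set.mem_setOf_eq]; omega, ?_⟩
      push_cast at hseq ⊢
      linear_combination hseq

theorem stmt_1 {V : Type*} [Fintype V] (A B C D : Set V)
    (hAD : (A ∩ D).Nonempty) (hBD : (B ∩ D).Nonempty) (hCD : (C ∩ D).Nonempty)
    (hABdisj : Disjoint (A \ D) (B \ D)) (hBCdisj : Disjoint (B \ D) (C \ D))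
    (hACdisj : Disjoint (A \ D) (C \ D))
    (hAne : (A \ D).Nonempty) (hBne : (B \ D).Nonempty) (hCne : (C \ D).Nonempty) :
    ¬ ∃ f : V ≃ ZMod (Fintype.card V),
        IsCyclicInterval (⇑f '' A) ∧ IsCyclicInterval (⇑f '' B) ∧
        IsCyclicInterval (⇑f '' C) ∧ IsCyclicInterval (⇑f '' D) := by
  classical
  rintro ⟨f, hA, hB, hC, hD⟩
  obtain ⟨a0, ha0⟩ := hAne
  have hAne : (A \ D).Nonempty := ⟨a0, ha0⟩
  have hnpos : 0 < Fintype.card V := Fintype.card_pos_iff.mpr ⟨a0⟩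
  haveI : NeZero (Fintype.card V) := ⟨by omega⟩
  obtain ⟨d, l, hDeq⟩ := hD
  -- f a0 ∉ f '' D
  have ha0img : f a0 ∉ f '' D := by
    rw [f.injective.mem_set_image]; exact ha0.2
  -- l < n
  have hl : l < Fintype.card V := by
    by_contra h
    push_neg at h
    apply ha0img
    rw [hDeq]
    refine ⟨(f a0 - d).val, ?_, ?_⟩
    · exact lt_of_lt_of_le (ZMod.val_lt _) h
    · simp [ZMod.natCast_val, ZMod.cast_id]
  -- translate hypotheses to images
  have himg_inter : ∀ S : Set V, (S ∩ D).Nonempty → (f '' S ∩ f '' D).Nonempty := by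
    intro S hS
    rw [← Set.image_inter f.injective]
    exact hS.image _
  have himg_diff : ∀ S : Set V, f '' S \ f '' D = f '' (S \ D) := by
    intro S; rw [Set.image_diff f.injective]
  have hdiff_ne : ∀ S : Set V, (S \ D).Nonempty → (f '' S \ f '' D).Nonempty := by
    intro S hS; rw [himg_diff]; exact hS.image _
  have hkey : ∀ S : Set V, IsCyclicInterval (f '' S) → (S ∩ D).Nonempty →
      (S \ D).Nonempty →
      d - 1 ∈ f '' S \ f '' D ∨ d + (l : ZMod (Fintype.card V)) ∈ f '' S \ f '' D := by
    intro S hS h1 h2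
    have := key_lemma d l hl (f '' S) hS
      (by rw [← hDeq]; exact himg_inter S h1)
      (by rw [← hDeq]; exact hdiff_ne S h2)
    rw [← hDeq] at this
    exact this
  have hA' := hkey A hA hAD hAne
  have hB' := hkey B hB hBD hBne
  have hC' := hkey C hC hCD hCne
  have dAB : Disjoint (f '' A \ f '' D) (f '' B \ f '' D) := by
    rw [himg_diff, himg_diff]
    exact (Set.disjoint_image_iff f.injective).mpr hABdisj
  have dBC : Disjoint (f '' B \ f '' D) (f '' C \ f '' D) := by
    rw [himg_diff, himg_diff]
    exact (Set.disjoint_image_iff f.injective).mpr hBCdisj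
  have dAC : Disjoint (f '' A \ f '' D) (f '' C \ f '' D) := by
    rw [himg_diff, himg_diff]
    exact (Set.disjoint_image_iff f.injective).mpr hACdisj
  rcases hA' with hA' | hA' <;> rcases hB' with hB' | hB' <;> rcases hC' with hC' | hC'
  · exact Set.disjoint_left.mp dAB hA' hB'
  · exact Set.disjoint_left.mp dAB hA' hB'
  · exact Set.disjoint_left.mp dAC hA' hC'
  · exact Set.disjoint_left.mp dBC hB' hC'
  · exact Set.disjoint_left.mp dBC hB' hC'
  · exact Set.disjoint_left.mp dAC hA' hC'
  · exact Set.disjoint_left.mp dAB hA' hB'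
  · exact Set.disjoint_left.mp dAB hA' hB'
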